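/- Let a, b, n be real numbers with n ≠ 2a − 1, and let φ : ℝ → ℝ be twice differentiable with φ(η) > 0 for all η, satisfying φφ'' − a(φ')² + bφ^(n+1) = 0. Then the quantity E(η) = (φ'(η))²·φ(η)^(−2a) + (2b/(n − 2a + 1))·φ(η)^(n−2a+1) is constant in η (real powers of positive reals). -/

import Mathlib

/-- first integral of the soliton ODE when `n ≠ 2a − 1`. -/
theorem stmt_4 (a b n : ℝ) (hn : n ≠ 2 * a - 1)
    (φ : ℝ → ℝ) (hφ : Differentiable ℝ φ) (hφ' : Differentiable ℝ (deriv φ))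
    (hpos : ∀ η : ℝ, 0 < φ η)
    (hode : ∀ η : ℝ,
      φ η * deriv (deriv φ) η - a * (deriv φ η) ^ 2 + b * (φ η) ^ (n + 1) = 0) :
    ∀ η₁ η₂ : ℝ,
      (deriv φ η₁) ^ 2 * (φ η₁) ^ (-(2 * a))
          + (2 * b / (n - 2 * a + 1)) * (φ η₁) ^ (n - 2 * a + 1)
        = (deriv φ η₂) ^ 2 * (φ η₂) ^ (-(2 * a))
          + (2 * b / (n - 2 * a + 1)) * (φ η₂) ^ (n - 2 * a + 1) := by
  have hc : n - 2 * a + 1 ≠ 0 := by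
    intro h; apply hn; linarith
  set E : ℝ → ℝ := fun η =>
    (deriv φ η) ^ 2 * (φ η) ^ (-(2 * a))
      + (2 * b / (n - 2 * a + 1)) * (φ η) ^ (n - 2 * a + 1) with hE
  have key : ∀ x : ℝ, HasDerivAt E 0 x := by
    intro x
    have hp := hpos x
    have h1 : HasDerivAt φ (deriv φ x) x := (hφ x).hasDerivAt
    have h2 : HasDerivAt (deriv φ) (deriv (deriv φ) x) x := (hφ' x).hasDerivAt
    have hA : HasDerivAt (fun y => (deriv φ y) ^ 2)
        (2 * deriv φ x * deriv (deriv φ) x) x := by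
      simpa [mul_comm] using h2.fun_pow 2
    have hB : HasDerivAt (fun y => (φ y) ^ (-(2 * a)))
        (deriv φ x * (-(2 * a)) * (φ x) ^ (-(2 * a) - 1)) x :=
      h1.rpow_const (Or.inl hp.ne')
    have hC : HasDerivAt (fun y => (φ y) ^ (n - 2 * a + 1))
        (deriv φ x * (n - 2 * a + 1) * (φ x) ^ (n - 2 * a + 1 - 1)) x :=
      h1.rpow_const (Or.inl hp.ne')
    have h := (hA.fun_mul hB).fun_add (hC.const_mul (2 * b / (n - 2 * a + 1)))
    refine h.congr_deriv (Eq.symm ?_)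
    have e1 : (φ x) ^ (-(2 * a)) = (φ x) ^ (-(2 * a) - 1) * φ x := by
      rw [← Real.rpow_add_one hp.ne']; norm_num
    have e2 : (φ x) ^ (n - 2 * a + 1 - 1)
        = (φ x) ^ (n + 1) * (φ x) ^ (-(2 * a) - 1) := by
      rw [← Real.rpow_add hp]; ring_nf
    rw [e1, e2]
    have hod := hode x
    field_simp
    linear_combination (-2 * deriv φ x * (φ x) ^ (-(2 * a) - 1)) * hod
  intro η₁ η₂
  exact is_const_of_deriv_eq_zero (fun x => (key x).differentiableAt)
    (fun x => (key x).deriv) η₁ η₂
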